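/- Second spherical cosine rule: for a spherical triangle with angles α, β, γ and side lengths a, b, c, cos a = (cos α + cos β cos γ)/(sin β sin γ), and moreover cos a = 1 + 2 sin ε sin(ε − α)/(sin β sin γ), where 2ε = α + β + γ − π is the excess. -/

import Mathlib

noncomputable section

/-- Euclidean dot product on `ℝ³`. -/
def dot3 (p q : Fin 3 → ℝ) : ℝ := p 0 * q 0 + p 1 * q 1 + p 2 * q 2

/-- Cross product on `ℝ³`. -/
def cross3 (p q : Fin 3 → ℝ) : Fin 3 → ℝ :=
  ![p 1 * q 2 - p 2 * q 1, p 2 * q 0 - p 0 * q 2, p 0 * q 1 - p 1 * q 0]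

/-- Euclidean norm on `ℝ³`. -/
def norm3 (p : Fin 3 → ℝ) : ℝ := Real.sqrt (dot3 p p)

/-- Determinant of three vectors in `ℝ³` (rows). -/
def det3 (u v w : Fin 3 → ℝ) : ℝ := dot3 u (cross3 v w)

/-- The `∗`-inner product of barycentric coordinate triples, given the cosines
`ca, cb, cc` of the side lengths (the Gram-matrix inner product). -/
def star3 (ca cb cc : ℝ) (p q : Fin 3 → ℝ) : ℝ :=
  p 0 * q 0 + p 1 * q 1 + p 2 * q 2 + (p 1 * q 2 + p 2 * q 1) * ca
    + (p 2 * q 0 + p 0 * q 2) * cb + (p 0 * q 1 + p 1 * q 0) * cc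

lemma dot3_comm (p q : Fin 3 → ℝ) : dot3 p q = dot3 q p := by simp [dot3]; ring

lemma dot3_self_nonneg (p : Fin 3 → ℝ) : 0 ≤ dot3 p p := by
  unfold dot3; nlinarith [mul_self_nonneg (p 0), mul_self_nonneg (p 1), mul_self_nonneg (p 2)]

lemma cross_dot (A B C D : Fin 3 → ℝ) :
    dot3 (cross3 A B) (cross3 C D) = dot3 A C * dot3 B D - dot3 A D * dot3 B C := by
  simp [dot3, cross3, Matrix.cons_val_zero, Matrix.cons_val_one, Matrix.head_cons]; ring

lemma det_sq (A B C : Fin 3 → ℝ) :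
    det3 A B C ^ 2 = dot3 A A * dot3 B B * dot3 C C + 2 * dot3 A B * dot3 B C * dot3 C A
      - dot3 A A * dot3 B C ^ 2 - dot3 B B * dot3 C A ^ 2 - dot3 C C * dot3 A B ^ 2 := by
  simp [det3, dot3, cross3, Matrix.cons_val_zero, Matrix.cons_val_one, Matrix.head_cons]; ring

lemma norm_cross (P Q : Fin 3 → ℝ) (hP : dot3 P P = 1) (hQ : dot3 Q Q = 1) :
    norm3 (cross3 P Q) = Real.sqrt (1 - dot3 P Q ^ 2) := by
  unfold norm3
  congr 1
  rw [cross_dot, hP, hQ, dot3_comm Q P]; ring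

lemma eps_id (α β γ : ℝ) :
    2 * Real.sin ((α+β+γ-Real.pi)/2) * Real.sin ((α+β+γ-Real.pi)/2 - α)
      = Real.cos α + Real.cos (β+γ) := by
  have h := Real.cos_sub_cos α (β+γ-Real.pi)
  rw [Real.cos_sub_pi] at h
  have e1 : (α + (β+γ-Real.pi))/2 = (α+β+γ-Real.pi)/2 := by ring
  have e2 : (α - (β+γ-Real.pi))/2 = -((α+β+γ-Real.pi)/2 - α) := by ring
  rw [e1, e2, Real.sin_neg] at h
  linarith

lemma key (x y z s px py pz : ℝ) (hs : s^2 = 1 - x^2 - y^2 - z^2 + 2*x*y*z)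
    (hpx : px^2 = 1 - x^2)
    (hs0 : s ≠ 0) (hpx0 : px ≠ 0) (hpy0 : py ≠ 0) (hpz0 : pz ≠ 0) :
    ((x - y*z)/(pz*py) + (y - z*x)/(px*pz) * ((z - x*y)/(py*px))) / (s/(px*pz) * (s/(py*px))) = x := by
  field_simp
  linear_combination (x-y*z)*hpx - x*hs

set_option maxHeartbeats 2000000 in
lemma core (x y z d w α β γ : ℝ)
    (hd : d = 1 - x^2 - y^2 - z^2 + 2*x*y*z) (hd0 : 0 < d)
    (hx1 : x^2 ≤ 1) (hy1 : y^2 ≤ 1) (hz1 : z^2 ≤ 1)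
    (hw : w = Real.arccos x)
    (hα : α = Real.arccos ((x - y*z)/(Real.sqrt (1-z^2) * Real.sqrt (1-y^2))))
    (hβ : β = Real.arccos ((y - z*x)/(Real.sqrt (1-x^2) * Real.sqrt (1-z^2))))
    (hγ : γ = Real.arccos ((z - x*y)/(Real.sqrt (1-y^2) * Real.sqrt (1-x^2)))) :
    Real.cos w = (Real.cos α + Real.cos β * Real.cos γ) / (Real.sin β * Real.sin γ) ∧
    Real.cos w = 1 + 2 * Real.sin ((α + β + γ - Real.pi) / 2)
      * Real.sin ((α + β + γ - Real.pi) / 2 - α) / (Real.sin β * Real.sin γ) := by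
  have hx2 : x^2 < 1 := by nlinarith [sq_nonneg (z - x*y)]
  have hy2 : y^2 < 1 := by nlinarith [sq_nonneg (x - y*z)]
  have hz2 : z^2 < 1 := by nlinarith [sq_nonneg (y - z*x)]
  obtain ⟨px, hpxd⟩ : ∃ t, Real.sqrt (1 - x^2) = t := ⟨_, rfl⟩
  obtain ⟨py, hpyd⟩ : ∃ t, Real.sqrt (1 - y^2) = t := ⟨_, rfl⟩
  obtain ⟨pz, hpzd⟩ : ∃ t, Real.sqrt (1 - z^2) = t := ⟨_, rfl⟩
  have hpx : px^2 = 1 - x^2 := by rw [← hpxd]; exact Real.sq_sqrt (by nlinarith)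
  have hpy : py^2 = 1 - y^2 := by rw [← hpyd]; exact Real.sq_sqrt (by nlinarith)
  have hpz : pz^2 = 1 - z^2 := by rw [← hpzd]; exact Real.sq_sqrt (by nlinarith)
  have hpx0 : 0 < px := by rw [← hpxd]; exact Real.sqrt_pos.mpr (by nlinarith)
  have hpy0 : 0 < py := by rw [← hpyd]; exact Real.sqrt_pos.mpr (by nlinarith)
  have hpz0 : 0 < pz := by rw [← hpzd]; exact Real.sqrt_pos.mpr (by nlinarith)
  obtain ⟨s, hsd⟩ : ∃ t, Real.sqrt d = t := ⟨_, rfl⟩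
  have hs : s^2 = 1 - x^2 - y^2 - z^2 + 2*x*y*z := by
    rw [← hsd, Real.sq_sqrt hd0.le, hd]
  have hs0 : 0 < s := by rw [← hsd]; exact Real.sqrt_pos.mpr hd0
  rw [hpzd, hpyd] at hα
  rw [hpxd, hpzd] at hβ
  rw [hpyd, hpxd] at hγ
  have hb1 : ((x - y*z)/(pz*py))^2 < 1 := by
    rw [div_pow, div_lt_one (by positivity)]
    have hmm : (pz*py)^2 = (1-z^2)*(1-y^2) := by rw [mul_pow, hpz, hpy]
    rw [hmm]; nlinarith [hd0, hd]
  have hb2 : ((y - z*x)/(px*pz))^2 < 1 := by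
    rw [div_pow, div_lt_one (by positivity)]
    have hmm : (px*pz)^2 = (1-x^2)*(1-z^2) := by rw [mul_pow, hpx, hpz]
    rw [hmm]; nlinarith [hd0, hd]
  have hb3 : ((z - x*y)/(py*px))^2 < 1 := by
    rw [div_pow, div_lt_one (by positivity)]
    have hmm : (py*px)^2 = (1-y^2)*(1-x^2) := by rw [mul_pow, hpy, hpx]
    rw [hmm]; nlinarith [hd0, hd]
  have hcα : Real.cos α = (x - y*z)/(pz*py) := by
    rw [hα]; exact Real.cos_arccos (by nlinarith) (by nlinarith)
  have hcβ : Real.cos β = (y - z*x)/(px*pz) := by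
    rw [hβ]; exact Real.cos_arccos (by nlinarith) (by nlinarith)
  have hcγ : Real.cos γ = (z - x*y)/(py*px) := by
    rw [hγ]; exact Real.cos_arccos (by nlinarith) (by nlinarith)
  have hsβ : Real.sin β = s/(px*pz) := by
    rw [hβ, Real.sin_arccos]
    have h1 : 1 - ((y - z*x)/(px*pz))^2 = d / (px*pz)^2 := by
      have hB : (0:ℝ) < (1-x^2)*(1-z^2) := by nlinarith
      rw [div_pow, mul_pow, hpx, hpz, hd, eq_div_iff (ne_of_gt hB), sub_mul, one_mul,
        div_mul_cancel₀ _ (ne_of_gt hB)]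
      ring
    rw [h1, Real.sqrt_div hd0.le, Real.sqrt_sq (by positivity), hsd]
  have hsγ : Real.sin γ = s/(py*px) := by
    rw [hγ, Real.sin_arccos]
    have h1 : 1 - ((z - x*y)/(py*px))^2 = d / (py*px)^2 := by
      have hB : (0:ℝ) < (1-y^2)*(1-x^2) := by nlinarith
      rw [div_pow, mul_pow, hpy, hpx, hd, eq_div_iff (ne_of_gt hB), sub_mul, one_mul,
        div_mul_cancel₀ _ (ne_of_gt hB)]
      ring
    rw [h1, Real.sqrt_div hd0.le, Real.sqrt_sq (by positivity), hsd]
  have hcw : Real.cos w = x := by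
    rw [hw]; exact Real.cos_arccos (by nlinarith) (by nlinarith)
  have part1 : Real.cos w = (Real.cos α + Real.cos β * Real.cos γ) / (Real.sin β * Real.sin γ) := by
    rw [hcw, hcα, hcβ, hcγ, hsβ, hsγ]
    exact (key x y z s px py pz hs hpx (ne_of_gt hs0) (ne_of_gt hpx0) (ne_of_gt hpy0)
      (ne_of_gt hpz0)).symm
  refine ⟨part1, ?_⟩
  have hne : Real.sin β * Real.sin γ ≠ 0 := by rw [hsβ, hsγ]; positivity
  rw [eps_id α β γ, Real.cos_add, part1]
  have hne1 := left_ne_zero_of_mul hne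
  have hne2 := right_ne_zero_of_mul hne
  field_simp
  ring

/-- Second spherical cosine rule: for a spherical triangle with angles
`α, β, γ` and sides `a, b, c`, `cos a = (cos α + cos β cos γ)/(sin β sin γ)`
and `cos a = 1 + 2 sin ε sin(ε−α)/(sin β sin γ)` where `2ε = α + β + γ − π`. -/
theorem second_spherical_cosine_rule (A B C : Fin 3 → ℝ)
    (hA : norm3 A = 1) (hB : norm3 B = 1) (hC : norm3 C = 1)
    (hS : det3 A B C ≠ 0)
    (a b c α β γ : ℝ)
    (ha : a = Real.arccos (dot3 B C)) (hb : b = Real.arccos (dot3 C A))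
    (hc : c = Real.arccos (dot3 A B))
    (hα : α = Real.arccos (dot3 (cross3 A B) (cross3 A C) /
      (norm3 (cross3 A B) * norm3 (cross3 A C))))
    (hβ : β = Real.arccos (dot3 (cross3 B C) (cross3 B A) /
      (norm3 (cross3 B C) * norm3 (cross3 B A))))
    (hγ : γ = Real.arccos (dot3 (cross3 C A) (cross3 C B) /
      (norm3 (cross3 C A) * norm3 (cross3 C B)))) :
    Real.cos a = (Real.cos α + Real.cos β * Real.cos γ) / (Real.sin β * Real.sin γ) ∧
    Real.cos a = 1 + 2 * Real.sin ((α + β + γ - Real.pi) / 2)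
      * Real.sin ((α + β + γ - Real.pi) / 2 - α) / (Real.sin β * Real.sin γ) := by
  have hunit : ∀ p : Fin 3 → ℝ, norm3 p = 1 → dot3 p p = 1 := by
    intro p hp
    have h := Real.sq_sqrt (dot3_self_nonneg p)
    rw [show Real.sqrt (dot3 p p) = norm3 p from rfl, hp] at h
    simpa using h.symm
  have hAA := hunit A hA
  have hBB := hunit B hB
  have hCC := hunit C hC
  refine core (dot3 B C) (dot3 C A) (dot3 A B) (det3 A B C ^ 2) a α β γ ?_ ?_ ?_ ?_ ?_ ?_ ?_ ?_ ?_
  · rw [det_sq, hAA, hBB, hCC]; ring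
  · exact lt_of_le_of_ne (sq_nonneg _) (Ne.symm (pow_ne_zero 2 hS))
  · have h := dot3_self_nonneg (cross3 B C)
    rw [cross_dot, hBB, hCC, dot3_comm C B] at h; nlinarith [h]
  · have h := dot3_self_nonneg (cross3 C A)
    rw [cross_dot, hCC, hAA, dot3_comm A C] at h; nlinarith [h]
  · have h := dot3_self_nonneg (cross3 A B)
    rw [cross_dot, hAA, hBB, dot3_comm B A] at h; nlinarith [h]
  · exact ha
  · rw [hα]; congr 1
    rw [cross_dot, hAA, norm_cross A B hAA hBB, norm_cross A C hAA hCC,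
      dot3_comm A C, dot3_comm B A]
    ring
  · rw [hβ]; congr 1
    rw [cross_dot, hBB, norm_cross B C hBB hCC, norm_cross B A hBB hAA,
      dot3_comm B A, dot3_comm C B]
    ring
  · rw [hγ]; congr 1
    rw [cross_dot, hCC, norm_cross C A hCC hAA, norm_cross C B hCC hBB,
      dot3_comm C B, dot3_comm A C]
    ring
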